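/- Osgood's lemma, vanishing case: Let γ ∈ L¹_loc(ℝ₊; ℝ₊), μ : ℝ₊ → ℝ₊ a continuous nondecreasing function with μ(r) > 0 for r > 0, and α a measurable nonnegative function satisfying α(t) ≤ ∫₀ᵗ γ(τ) μ(α(τ)) dτ for all t ∈ ℝ₊. If ∫₀¹ dr/μ(r) = +∞, then α(t) = 0 for all t ∈ ℝ₊. -/

import Mathlib

open MeasureTheory Set

/-- **Osgood's lemma, vanishing case.** If `0 ≤ α t ≤ ∫₀ᵗ γ μ(α)` with `γ ≥ 0` locally
integrable, `μ` continuous nondecreasing and positive on `(0,∞)`, and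
`∫₀¹ dr/μ(r) = +∞` (i.e. `1/μ` is not integrable on `(0,1]`), then `α ≡ 0` on `ℝ₊`. -/
theorem osgood_lemma_vanishing (γ μ α : ℝ → ℝ)
    (hγ_nonneg : ∀ t, 0 ≤ t → 0 ≤ γ t)
    (hγ_loc : ∀ t, 0 ≤ t → IntegrableOn γ (Icc 0 t))
    (hμ_cont : Continuous μ) (hμ_mono : MonotoneOn μ (Ici 0))
    (hμ_pos : ∀ r, 0 < r → 0 < μ r)
    (hμ_div : ¬ IntegrableOn (fun r => (μ r)⁻¹) (Ioc (0:ℝ) 1))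
    (hα_meas : Measurable α)
    (hα_nonneg : ∀ t, 0 ≤ t → 0 ≤ α t)
    (hα : ∀ t, 0 ≤ t → α t ≤ ∫ τ in (0:ℝ)..t, γ τ * μ (α τ)) :
    ∀ t, 0 ≤ t → α t = 0 := by
  have hμ0 : 0 ≤ μ 0 := by
    have h1 : Filter.Tendsto μ (nhdsWithin 0 (Ioi 0)) (nhds (μ 0)) :=
      (hμ_cont.tendsto 0).mono_left nhdsWithin_le_nhds
    refine ge_of_tendsto h1 ?_
    filter_upwards [self_mem_nhdsWithin] with r hr
    exact (hμ_pos r hr).le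
  have hμ_nonneg : ∀ r, 0 ≤ r → 0 ≤ μ r := by
    intro r hr
    rcases hr.eq_or_lt with h | h
    · simpa [← h] using hμ0
    · exact (hμ_pos r h).le
  set f : ℝ → ℝ := fun τ => γ τ * μ (α τ) with hfdef
  have hf_nonneg : ∀ τ, 0 ≤ τ → 0 ≤ f τ := fun τ hτ =>
    mul_nonneg (hγ_nonneg τ hτ) (hμ_nonneg _ (hα_nonneg τ hτ))
  have hinv_cont : ContinuousOn (fun r => (μ r)⁻¹) (Ioi 0) :=
    ContinuousOn.inv₀ hμ_cont.continuousOn (fun r hr => (hμ_pos r hr).ne')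
  have hinv_ii : ∀ p q : ℝ, 0 < p → 0 < q →
      IntervalIntegrable (fun r => (μ r)⁻¹) volume p q := by
    intro p q hp hq
    apply (hinv_cont.mono ?_).intervalIntegrable
    intro r hr
    exact lt_of_lt_of_le (lt_min hp hq) hr.1
  intro t ht
  by_cases hint : IntegrableOn f (Ioc 0 t)
  swap
  · have h0 : (∫ τ in (0:ℝ)..t, f τ) = 0 := by
      rw [intervalIntegral.integral_of_le ht]
      exact integral_undef hint
    have h1 := hα t ht
    rw [h0] at h1
    exact le_antisymm h1 (hα_nonneg t ht)
  by_contra hne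
  have hat : 0 < α t := (hα_nonneg t ht).lt_of_ne (Ne.symm hne)
  have htpos : 0 < t := by
    rcases ht.eq_or_lt with h | h
    · exfalso
      have h1 := hα t ht
      rw [← h, intervalIntegral.integral_same] at h1
      rw [← h] at hat
      exact absurd h1 (not_le.2 hat)
    · exact h
  set b : ℝ := min (α t) 1 with hbdef
  have hb_pos : 0 < b := lt_min hat one_pos
  have hb1 : b ≤ 1 := min_le_right _ _
  have hbat : b ≤ α t := min_le_left _ _
  have hicc : uIcc (0:ℝ) t = Icc 0 t := uIcc_of_le ht
  have hf_int : IntervalIntegrable f volume 0 t :=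
    (intervalIntegrable_iff_integrableOn_Ioc_of_le ht).2 hint
  have hγ_int : IntervalIntegrable γ volume 0 t := by
    apply MeasureTheory.IntegrableOn.intervalIntegrable
    rw [hicc]; exact hγ_loc t ht
  have hf_ii : ∀ x y : ℝ, x ∈ Icc 0 t → y ∈ Icc 0 t → IntervalIntegrable f volume x y :=
    fun x y hx hy => hf_int.mono_set
      (uIcc_subset_uIcc (by rw [hicc]; exact hx) (by rw [hicc]; exact hy))
  have hγ_ii : ∀ x y : ℝ, x ∈ Icc 0 t → y ∈ Icc 0 t → IntervalIntegrable γ volume x y :=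
    fun x y hx hy => hγ_int.mono_set
      (uIcc_subset_uIcc (by rw [hicc]; exact hx) (by rw [hicc]; exact hy))
  have h0mem : (0:ℝ) ∈ Icc (0:ℝ) t := ⟨le_rfl, ht⟩
  have htmem : t ∈ Icc (0:ℝ) t := ⟨ht, le_rfl⟩
  -- the key estimate
  have key : ∀ ε : ℝ, 0 < ε → ε < b →
      (∫ r in ε..b, (μ r)⁻¹) ≤ ∫ τ in (0:ℝ)..t, γ τ := by
    intro ε hε hεb
    set ω : ℝ → ℝ := fun s => ε + ∫ τ in (0:ℝ)..s, f τ with hωdef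
    have hω0 : ω 0 = ε := by simp [hωdef]
    have hω_mono : MonotoneOn ω (Icc 0 t) := by
      intro p hp q hq hpq
      have h1 : (∫ τ in (0:ℝ)..p, f τ) + ∫ τ in p..q, f τ = ∫ τ in (0:ℝ)..q, f τ :=
        intervalIntegral.integral_add_adjacent_intervals (hf_ii 0 p h0mem hp) (hf_ii p q hp hq)
      have h2 : 0 ≤ ∫ τ in p..q, f τ :=
        intervalIntegral.integral_nonneg hpq (fun u hu => hf_nonneg u (hp.1.trans hu.1))
      simp only [hωdef]
      linarith
    have hεω : ∀ s, s ∈ Icc (0:ℝ) t → ε ≤ ω s := by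
      intro s hs
      have h2 : 0 ≤ ∫ τ in (0:ℝ)..s, f τ :=
        intervalIntegral.integral_nonneg hs.1 (fun u hu => hf_nonneg u hu.1)
      simp only [hωdef]
      linarith
    have hαω : ∀ s, s ∈ Icc (0:ℝ) t → α s ≤ ω s := by
      intro s hs
      have h1 := hα s hs.1
      simp only [hωdef]
      linarith
    have hω_cont : ContinuousOn ω (Icc 0 t) := by
      have h1 : ContinuousOn (fun s => ∫ τ in (0:ℝ)..s, f τ) (Icc 0 t) := by
        have := intervalIntegral.continuousOn_primitive_interval (a := (0:ℝ)) (b := t)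
          (μ := volume) (f := f) (by rw [hicc, integrableOn_Icc_iff_integrableOn_Ioc]; exact hint)
        rwa [hicc] at this
      exact continuousOn_const.add h1
    set Φ : ℝ → ℝ := fun x => ∫ r in ε..x, (μ r)⁻¹ with hΦdef
    have hεωt : ε ≤ ω t := hεω t htmem
    have hεpos_ωt : 0 < ω t := lt_of_lt_of_le hε hεωt
    have hωmem : ∀ s, s ∈ Icc (0:ℝ) t → ω s ∈ Icc ε (ω t) :=
      fun s hs => ⟨hεω s hs, hω_mono hs htmem hs.2⟩
    have hΦ_cont : ContinuousOn Φ (Icc ε (ω t)) := by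
      have hI : IntegrableOn (fun r => (μ r)⁻¹) (uIcc ε (ω t)) := by
        rw [uIcc_of_le hεωt]
        exact ContinuousOn.integrableOn_Icc
          (hinv_cont.mono (fun r hr => lt_of_lt_of_le hε hr.1))
      exact intervalIntegral.continuousOn_primitive_interval hI |>.mono
        (by rw [uIcc_of_le hεωt])
    have hΓ_cont : ContinuousOn (fun s => ∫ τ in (0:ℝ)..s, γ τ) (Icc 0 t) := by
      have := intervalIntegral.continuousOn_primitive_interval (a := (0:ℝ)) (b := t)
        (μ := volume) (f := γ) (by rw [hicc]; exact hγ_loc t ht)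
      rwa [hicc] at this
    -- continuous induction
    have main : ∀ c : ℝ, 1 < c → Φ (ω t) ≤ c * ∫ τ in (0:ℝ)..t, γ τ := by
      intro c hc
      have hsub : Icc (0:ℝ) t ⊆ {s | Φ (ω s) ≤ c * ∫ τ in (0:ℝ)..s, γ τ} := by
        apply IsClosed.Icc_subset_of_forall_exists_gt
        · have hcl : IsClosed {s ∈ Icc (0:ℝ) t | Φ (ω s) ≤ c * ∫ τ in (0:ℝ)..s, γ τ} :=
            IsClosed.isClosed_le isClosed_Icc (hΦ_cont.comp hω_cont hωmem)
              (continuousOn_const.mul hΓ_cont)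
          have : {s | Φ (ω s) ≤ c * ∫ τ in (0:ℝ)..s, γ τ} ∩ Icc 0 t
              = {s ∈ Icc (0:ℝ) t | Φ (ω s) ≤ c * ∫ τ in (0:ℝ)..s, γ τ} := by
            ext s; constructor
            · rintro ⟨h1, h2⟩; exact ⟨h2, h1⟩
            · rintro ⟨h1, h2⟩; exact ⟨h2, h1⟩
          rw [this]
          exact hcl
        · show Φ (ω 0) ≤ c * ∫ τ in (0:ℝ)..(0:ℝ), γ τ
          rw [hω0, intervalIntegral.integral_same]
          simp [hΦdef]
        · rintro x ⟨hxs, hx0, hxt⟩ Y hY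
          have hxs' : Φ (ω x) ≤ c * ∫ τ in (0:ℝ)..x, γ τ := hxs
          set t' : ℝ := min Y t with ht'def
          have hxt' : x < t' := lt_min hY hxt
          have hxmem : x ∈ Icc (0:ℝ) t := ⟨hx0, hxt.le⟩
          have hωx_pos : 0 < ω x := lt_of_lt_of_le hε (hεω x hxmem)
          have hμωx : 0 < μ (ω x) := hμ_pos _ hωx_pos
          have hcw : ContinuousWithinAt (fun s => μ (ω s)) (Icc 0 t) x :=
            (hμ_cont.comp_continuousOn hω_cont) x hxmem
          have hicc_mem : Icc (0:ℝ) t ∈ nhdsWithin x (Ioi x) :=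
            Icc_mem_nhdsGT_of_mem ⟨hx0, hxt⟩
          have hten : Filter.Tendsto (fun s => μ (ω s)) (nhdsWithin x (Ioi x))
              (nhds (μ (ω x))) := hcw.mono_left (nhdsWithin_le_of_mem hicc_mem)
          have hev1 : ∀ᶠ y in nhdsWithin x (Ioi x), μ (ω y) < c * μ (ω x) :=
            hten.eventually_lt_const (by nlinarith)
          have hev2 : ∀ᶠ y in nhdsWithin x (Ioi x), y ∈ Ioc x t' :=
            Filter.eventually_of_mem (Ioc_mem_nhdsGT hxt') (fun y hy => hy)
          obtain ⟨y, hy1, hy2⟩ := (hev1.and hev2).exists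
          have hy0 : (0:ℝ) ≤ y := hx0.trans hy2.1.le
          have hyt : y ≤ t := hy2.2.trans (min_le_right _ _)
          have hymem : y ∈ Icc (0:ℝ) t := ⟨hy0, hyt⟩
          have hxy : x ≤ y := hy2.1.le
          have hωxy : ω x ≤ ω y := hω_mono hxmem hymem hxy
          have hωy_pos : 0 < ω y := lt_of_lt_of_le hωx_pos hωxy
          refine ⟨y, ?_, hy2.1, hy2.2.trans (min_le_left _ _)⟩
          show Φ (ω y) ≤ c * ∫ τ in (0:ℝ)..y, γ τ
          have hadd : Φ (ω x) + (∫ r in (ω x)..(ω y), (μ r)⁻¹) = Φ (ω y) := by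
            simp only [hΦdef]
            exact intervalIntegral.integral_add_adjacent_intervals
              (hinv_ii ε (ω x) hε hωx_pos) (hinv_ii _ _ hωx_pos hωy_pos)
          have hbound1 : (∫ r in (ω x)..(ω y), (μ r)⁻¹) ≤ (ω y - ω x) * (μ (ω x))⁻¹ := by
            have h1 : (∫ r in (ω x)..(ω y), (μ r)⁻¹)
                ≤ ∫ _r in (ω x)..(ω y), (μ (ω x))⁻¹ := by
              apply intervalIntegral.integral_mono_on hωxy
                (hinv_ii _ _ hωx_pos hωy_pos) intervalIntegrable_const
              intro r hr
              have hrpos : 0 < r := lt_of_lt_of_le hωx_pos hr.1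
              exact inv_anti₀ hμωx
                (hμ_mono (mem_Ici.2 hωx_pos.le) (mem_Ici.2 hrpos.le) hr.1)
            simpa [intervalIntegral.integral_const, smul_eq_mul] using h1
          have hωdiff : ω y - ω x = ∫ τ in x..y, f τ := by
            have h1 : (∫ τ in (0:ℝ)..x, f τ) + ∫ τ in x..y, f τ = ∫ τ in (0:ℝ)..y, f τ :=
              intervalIntegral.integral_add_adjacent_intervals
                (hf_ii 0 x h0mem hxmem) (hf_ii x y hxmem hymem)
            simp only [hωdef]
            linarith
          have hbound2 : (∫ τ in x..y, f τ) ≤ μ (ω y) * ∫ τ in x..y, γ τ := by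
            have h1 : (∫ τ in x..y, f τ) ≤ ∫ τ in x..y, γ τ * μ (ω y) := by
              apply intervalIntegral.integral_mono_on hxy (hf_ii x y hxmem hymem)
                ((hγ_ii x y hxmem hymem).mul_const _)
              intro τ hτ
              have hτmem : τ ∈ Icc (0:ℝ) t := ⟨hx0.trans hτ.1, hτ.2.trans hyt⟩
              have h2 : α τ ≤ ω y := (hαω τ hτmem).trans (hω_mono hτmem hymem hτ.2)
              exact mul_le_mul_of_nonneg_left
                (hμ_mono (mem_Ici.2 (hα_nonneg τ hτmem.1)) (mem_Ici.2 hωy_pos.le) h2)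
                (hγ_nonneg τ hτmem.1)
            rw [intervalIntegral.integral_mul_const] at h1
            linarith [h1]
          have hγ_nn : 0 ≤ ∫ τ in x..y, γ τ :=
            intervalIntegral.integral_nonneg hxy (fun u hu => hγ_nonneg u (hx0.trans hu.1))
          have hΓadd : (∫ τ in (0:ℝ)..x, γ τ) + (∫ τ in x..y, γ τ)
              = ∫ τ in (0:ℝ)..y, γ τ :=
            intervalIntegral.integral_add_adjacent_intervals
              (hγ_ii 0 x h0mem hxmem) (hγ_ii x y hxmem hymem)
          have h3 : (ω y - ω x) * (μ (ω x))⁻¹ ≤ c * ∫ τ in x..y, γ τ := by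
            have h4 : ω y - ω x ≤ μ (ω y) * ∫ τ in x..y, γ τ := by
              rw [hωdiff]; exact hbound2
            have h4' : (ω y - ω x) * (μ (ω x))⁻¹
                ≤ (μ (ω y) * ∫ τ in x..y, γ τ) * (μ (ω x))⁻¹ :=
              mul_le_mul_of_nonneg_right h4 (inv_nonneg.2 hμωx.le)
            have h5 : (μ (ω y) * ∫ τ in x..y, γ τ) * (μ (ω x))⁻¹
                ≤ (c * μ (ω x) * ∫ τ in x..y, γ τ) * (μ (ω x))⁻¹ :=
              mul_le_mul_of_nonneg_right
                (mul_le_mul_of_nonneg_right hy1.le hγ_nn) (inv_nonneg.2 hμωx.le)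
            have h6 : (c * μ (ω x) * ∫ τ in x..y, γ τ) * (μ (ω x))⁻¹
                = c * ∫ τ in x..y, γ τ := by
              field_simp
            linarith
          have hΓadd' : c * (∫ τ in (0:ℝ)..x, γ τ) + c * (∫ τ in x..y, γ τ)
              = c * ∫ τ in (0:ℝ)..y, γ τ := by rw [← hΓadd]; ring
          linarith
      exact hsub htmem
    have hΦωt : Φ (ω t) ≤ ∫ τ in (0:ℝ)..t, γ τ := by
      have hten : Filter.Tendsto (fun c : ℝ => c * ∫ τ in (0:ℝ)..t, γ τ)
          (nhdsWithin 1 (Ioi 1)) (nhds (∫ τ in (0:ℝ)..t, γ τ)) := by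
        have h1 := ((continuous_mul_right (∫ τ in (0:ℝ)..t, γ τ)).tendsto 1).mono_left
          (nhdsWithin_le_nhds (s := Ioi (1:ℝ)))
        simpa using h1
      refine ge_of_tendsto hten ?_
      filter_upwards [self_mem_nhdsWithin] with c hc
      exact main c hc
    have hαt_le : α t ≤ ω t := hαω t htmem
    have hbωt : b ≤ ω t := hbat.trans hαt_le
    have e1 : (∫ r in ε..b, (μ r)⁻¹) + (∫ r in b..(ω t), (μ r)⁻¹) = Φ (ω t) :=
      intervalIntegral.integral_add_adjacent_intervals
        (hinv_ii ε b hε hb_pos) (hinv_ii b (ω t) hb_pos hεpos_ωt)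
    have e2 : 0 ≤ ∫ r in b..(ω t), (μ r)⁻¹ :=
      intervalIntegral.integral_nonneg hbωt
        (fun u hu => inv_nonneg.2 (hμ_nonneg u (hb_pos.le.trans hu.1)))
    linarith
  -- derive a contradiction with the divergence hypothesis
  apply hμ_div
  have hseq : Filter.Tendsto (fun n : ℕ => b / (n + 2)) Filter.atTop (nhds 0) := by
    have h1 := (tendsto_const_div_atTop_nhds_zero_nat b).comp (Filter.tendsto_add_atTop_nat 2)
    refine h1.congr fun n => ?_
    show b / ((n + 2 : ℕ) : ℝ) = b / ((n : ℝ) + 2)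
    push_cast; ring
  have hapos : ∀ n : ℕ, 0 < b / ((n : ℝ) + 2) := by
    intro n; positivity
  have haltb : ∀ n : ℕ, b / ((n : ℝ) + 2) < b := by
    intro n
    apply div_lt_self hb_pos
    have : (0:ℝ) ≤ (n : ℝ) := Nat.cast_nonneg n
    linarith
  have hcontra : IntegrableOn (fun r => (μ r)⁻¹) (Ioc 0 b) := by
    apply MeasureTheory.integrableOn_Ioc_of_intervalIntegral_norm_bounded_left
      (I := ∫ τ in (0:ℝ)..t, γ τ) (a := fun n : ℕ => b / ((n : ℝ) + 2)) (b := b)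
      (l := Filter.atTop)
    · intro n
      exact (intervalIntegrable_iff_integrableOn_Ioc_of_le (haltb n).le).1
        (hinv_ii _ b (hapos n) hb_pos)
    · exact hseq
    · apply Filter.Eventually.of_forall
      intro n
      have heq : (∫ x in Ioc (b / ((n : ℝ) + 2)) b, ‖(μ x)⁻¹‖)
          = ∫ x in Ioc (b / ((n : ℝ) + 2)) b, (μ x)⁻¹ := by
        apply setIntegral_congr_fun measurableSet_Ioc
        intro x hx
        exact Real.norm_of_nonneg (inv_nonneg.2 (hμ_nonneg x (((hapos n).trans hx.1).le)))
      rw [heq, ← intervalIntegral.integral_of_le (haltb n).le]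
      exact key _ (hapos n) (haltb n)
  have h2 : IntegrableOn (fun r => (μ r)⁻¹) (Ioc b 1) :=
    (intervalIntegrable_iff_integrableOn_Ioc_of_le hb1).1 (hinv_ii b 1 hb_pos one_pos)
  have h3 : Ioc (0:ℝ) 1 ⊆ Ioc 0 b ∪ Ioc b 1 :=
    (Ioc_union_Ioc_eq_Ioc hb_pos.le hb1).symm.subset
  exact ((hcontra.union h2).mono_set h3)
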